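/- arXiv:2001.10578 — 5 statements merged into one kernel-verified Lean document; each statement's English description precedes it below -/
import Mathlib

section
/- Let k be a field and A a k-algebra. Any two symmetric separability idempotents for A are equal; that is, if p = Σ p¹ ⊗ p² and q = Σ q¹ ⊗ q² are elements of A ⊗ A each satisfying (i) (x·p¹) ⊗ p² = p¹ ⊗ (p²·x) for all x ∈ A, (ii) Σ p¹·p² = 1, and (iii) invariance under the flip of tensor factors, then p = q. -/
open scoped TensorProduct

/-- `p ∈ A ⊗[k] A` is a symmetric separability idempotent for the `k`-algebra `A`:
(i) `(x·p¹) ⊗ p² = p¹ ⊗ (p²·x)` for all `x ∈ A`, (ii) `Σ p¹·p² = 1`, and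
(iii) `p` is invariant under the flip of the tensor factors. -/
def IsSymmSepIdem (k : Type*) {A : Type*} [CommSemiring k] [Ring A] [Algebra k A]
    (p : A ⊗[k] A) : Prop :=
  (∀ x : A, LinearMap.rTensor A (LinearMap.mulLeft k x) p
      = LinearMap.lTensor A (LinearMap.mulRight k x) p) ∧
  LinearMap.mul' k A p = 1 ∧
  TensorProduct.comm k A A p = p

open MulOpposite LinearMap in
/-- Any two symmetric separability idempotents for a `k`-algebra `A` are equal. -/
theorem symmSepIdem_unique (k A : Type*) [Field k] [Ring A] [Algebra k A]
    (p q : A ⊗[k] A) (hp : IsSymmSepIdem k p) (hq : IsSymmSepIdem k q) :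
    p = q := by
  classical
  set φ : A ⊗[k] A ≃ₗ[k] A ⊗[k] Aᵐᵒᵖ :=
    TensorProduct.congr (LinearEquiv.refl k A) (opLinearEquiv k) with hφ
  have φtmul : ∀ (x y : A), φ (x ⊗ₜ[k] y) = x ⊗ₜ[k] op y := by
    intro x y; simp [hφ]
  -- product with pure tensors as tensor maps
  have mulr1 : ∀ (a : A) (r : A ⊗[k] A),
      φ r * (a ⊗ₜ[k] (1 : Aᵐᵒᵖ)) = φ (rTensor A (mulRight k a) r) := by
    intro a r
    induction r using TensorProduct.induction_on with
    | zero => simp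
    | tmul x y => simp [φtmul, Algebra.TensorProduct.tmul_mul_tmul]
    | add x y hx hy => simp only [map_add, add_mul, hx, hy]
  have mulr2 : ∀ (a : A) (r : A ⊗[k] A),
      φ r * ((1 : A) ⊗ₜ[k] op a) = φ (lTensor A (mulLeft k a) r) := by
    intro a r
    induction r using TensorProduct.induction_on with
    | zero => simp
    | tmul x y => simp [φtmul, Algebra.TensorProduct.tmul_mul_tmul, ← op_mul]
    | add x y hx hy => simp only [map_add, add_mul, hx, hy]
  have mull1 : ∀ (a : A) (r : A ⊗[k] A),
      (a ⊗ₜ[k] (1 : Aᵐᵒᵖ)) * φ r = φ (rTensor A (mulLeft k a) r) := by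
    intro a r
    induction r using TensorProduct.induction_on with
    | zero => simp
    | tmul x y => simp [φtmul, Algebra.TensorProduct.tmul_mul_tmul]
    | add x y hx hy => simp only [map_add, mul_add, hx, hy]
  have mull2 : ∀ (a : A) (r : A ⊗[k] A),
      ((1 : A) ⊗ₜ[k] op a) * φ r = φ (lTensor A (mulRight k a) r) := by
    intro a r
    induction r using TensorProduct.induction_on with
    | zero => simp
    | tmul x y => simp [φtmul, Algebra.TensorProduct.tmul_mul_tmul, ← op_mul]
    | add x y hx hy => simp only [map_add, mul_add, hx, hy]
  -- comm swaps rTensor and lTensor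
  have hcomm : ∀ (f : A →ₗ[k] A) (r : A ⊗[k] A),
      TensorProduct.comm k A A (rTensor A f r) = lTensor A f (TensorProduct.comm k A A r) ∧
      TensorProduct.comm k A A (lTensor A f r) = rTensor A f (TensorProduct.comm k A A r) := by
    intro f r
    induction r using TensorProduct.induction_on with
    | zero => simp
    | tmul x y => simp
    | add x y hx hy => simp only [map_add, hx.1, hx.2, hy.1, hy.2, and_self]
  -- flipped centrality of p
  have hp' : ∀ a : A, rTensor A (mulRight k a) p = lTensor A (mulLeft k a) p := by
    intro a
    have h1 := congrArg (TensorProduct.comm k A A) (hp.1 a)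
    rw [(hcomm (mulLeft k a) p).1, (hcomm (mulRight k a) p).2, hp.2.2] at h1
    exact h1.symm
  -- F2 : right multiplication identity for φ p
  have F2 : ∀ a : A, φ p * (a ⊗ₜ[k] (1 : Aᵐᵒᵖ)) = φ p * ((1 : A) ⊗ₜ[k] op a) := by
    intro a; rw [mulr1, mulr2, hp' a]
  -- F1 : left multiplication identity for φ q
  have F1 : ∀ a : A, (a ⊗ₜ[k] (1 : Aᵐᵒᵖ)) * φ q = ((1 : A) ⊗ₜ[k] op a) * φ q := by
    intro a; rw [mull1, mull2, hq.1 a]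
  -- main computation 1 : φ p * φ q = φ q
  have h1 : φ p * φ q = φ q := by
    have key : ∀ r : A ⊗[k] A,
        φ r * φ q = ((LinearMap.mul' k A r) ⊗ₜ[k] (1 : Aᵐᵒᵖ)) * φ q := by
      intro r
      induction r using TensorProduct.induction_on with
      | zero => simp
      | tmul a b =>
          have hsplit : (φ (a ⊗ₜ[k] b) : A ⊗[k] Aᵐᵒᵖ)
              = (a ⊗ₜ[k] (1 : Aᵐᵒᵖ)) * ((1 : A) ⊗ₜ[k] op b) := by
            simp [φtmul, Algebra.TensorProduct.tmul_mul_tmul]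
          rw [hsplit, mul_assoc, ← F1 b, ← mul_assoc,
            Algebra.TensorProduct.tmul_mul_tmul, mul_one]
          simp
      | add x y hx hy => simp only [map_add, add_mul, hx, hy, TensorProduct.add_tmul]
    rw [key p, hp.2.1, ← Algebra.TensorProduct.one_def, one_mul]
  -- main computation 2 : φ p * φ q = φ p
  have h2 : φ p * φ q = φ p := by
    have key : ∀ r : A ⊗[k] A,
        φ p * φ r
          = φ p * ((1 : A) ⊗ₜ[k] op (LinearMap.mul' k A (TensorProduct.comm k A A r))) := by
      intro r
      induction r using TensorProduct.induction_on with
      | zero => simp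
      | tmul a b =>
          have hsplit : (φ (a ⊗ₜ[k] b) : A ⊗[k] Aᵐᵒᵖ)
              = (a ⊗ₜ[k] (1 : Aᵐᵒᵖ)) * ((1 : A) ⊗ₜ[k] op b) := by
            simp [φtmul, Algebra.TensorProduct.tmul_mul_tmul]
          rw [hsplit, ← mul_assoc, F2 a, mul_assoc,
            Algebra.TensorProduct.tmul_mul_tmul, one_mul, ← op_mul]
          simp
      | add x y hx hy =>
          simp only [map_add, mul_add, hx, hy, op_add, TensorProduct.tmul_add]
    rw [key q, hq.2.2, hq.2.1, op_one, ← Algebra.TensorProduct.one_def, mul_one]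
  exact φ.injective (h2.symm.trans h1)
end

section
/- Let k be an algebraically closed field of characteristic zero and A a finite-dimensional semisimple k-algebra. Then there exists a unique symmetric separability idempotent for A, i.e. a unique element p = Σ p¹ ⊗ p² ∈ A ⊗ A satisfying (i) (x·p¹) ⊗ p² = p¹ ⊗ (p²·x) for all x ∈ A, (ii) Σ p¹·p² = 1, and (iii) invariance under the flip of tensor factors. -/
open scoped TensorProduct

open LinearMap

set_option linter.unusedSectionVars false

section TraceForm

variable (k A : Type*) [Field k] [CharZero k] [Ring A] [Algebra k A]
  [FiniteDimensional k A]

/-- The trace form of the left regular representation. -/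
noncomputable def trB : LinearMap.BilinForm k A :=
  (LinearMap.mul k A).compr₂ ((LinearMap.trace k A) ∘ₗ (LinearMap.mul k A))

variable {k A}

lemma trB_apply (a b : A) :
    trB k A a b = LinearMap.trace k A (LinearMap.mulLeft k (a * b)) := rfl

lemma mul_eq_mulLeft (a : A) : LinearMap.mul k A a = LinearMap.mulLeft k a := by
  ext x; simp

lemma trB_symm (a b : A) : trB k A a b = trB k A b a := by
  rw [trB_apply, trB_apply, mulLeft_mul, mulLeft_mul, ← Module.End.mul_eq_comp,
    ← Module.End.mul_eq_comp, LinearMap.trace_mul_comm]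

lemma trB_assoc (a b c : A) : trB k A (a * b) c = trB k A a (b * c) := by
  rw [trB_apply, trB_apply, mul_assoc]

variable (k A) in
lemma trB_isSymm : (trB k A).IsSymm := ⟨fun a b => by
  simpa using (trB_symm (k := k) (A := A) a b)⟩

end TraceForm

section Nondeg

variable (k A : Type*) [Field k] [CharZero k] [Ring A] [Algebra k A]
  [FiniteDimensional k A] [IsSemisimpleRing A]

/-- The left radical of the trace form, as a left ideal. -/
noncomputable def trBker : Ideal A where
  carrier := {a | ∀ b, trB k A a b = 0}
  add_mem' := fun {x y} hx hy b => by
    have : trB k A (x + y) b = trB k A x b + trB k A y b := by simp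
    rw [this, hx b, hy b, add_zero]
  zero_mem' := fun b => by simp
  smul_mem' := fun c {x} hx b => by
    have : trB k A (c * x) b = trB k A x (b * c) := by
      rw [trB_assoc, trB_symm, trB_assoc]
    simpa [this] using hx (b * c)

theorem trB_nondeg : (trB k A).Nondegenerate := by
  classical
  obtain ⟨e, he, hspan⟩ := IsSemisimpleRing.ideal_eq_span_idempotent (trBker k A)
  have heN : e ∈ trBker k A := hspan ▸ Submodule.mem_span_singleton_self e
  have h0 : LinearMap.trace k A (mulLeft k e) = 0 := by
    have h := heN e
    rwa [trB_apply, he] at h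
  obtain ⟨p, hp⟩ := (isProj_iff_isIdempotentElem (mulLeft k e)).mpr
    (by rw [IsIdempotentElem, Module.End.mul_eq_comp, ← mulLeft_mul, he])
  have hfr : (Module.finrank k p : k) = 0 := by rw [← hp.trace, h0]
  have hpbot : p = ⊥ := Submodule.finrank_eq_zero.mp (Nat.cast_eq_zero.mp hfr)
  have he0 : e = 0 := by
    have hm : mulLeft k e 1 ∈ p := hp.map_mem 1
    rw [hpbot] at hm
    simpa using hm
  refine LinearMap.BilinForm.Nondegenerate.ofSeparatingLeft ?_
  intro a ha
  have haN : a ∈ trBker k A := ha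
  rw [hspan, he0] at haN
  rw [Ideal.span_singleton_eq_bot.mpr rfl] at haN
  simpa using haN

end Nondeg

section Existence

variable (k A : Type*) [Field k] [CharZero k] [Ring A] [Algebra k A]
  [FiniteDimensional k A] [IsSemisimpleRing A]

theorem exists_isSymmSepIdem : ∃ p : A ⊗[k] A, IsSymmSepIdem k p := by
  classical
  have hnd := trB_nondeg k A
  set B := trB k A with hB
  set ι := Module.Free.ChooseBasisIndex k A
  set b : Module.Basis ι k A := Module.Free.chooseBasis k A with hb
  set d : Module.Basis ι k A := LinearMap.BilinForm.dualBasis B hnd b with hd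
  have hdb : ∀ i j, B (d i) (b j) = if j = i then 1 else 0 := fun i j =>
    LinearMap.BilinForm.apply_dualBasis_left hnd b i j
  have hreprd : ∀ (z : A) i, d.repr z i = B z (b i) := fun z i =>
    LinearMap.BilinForm.dualBasis_repr_apply hnd b z i
  have hexpd : ∀ z : A, ∑ i, B z (b i) • d i = z := by
    intro z
    simp_rw [← hreprd]
    exact d.sum_repr z
  have hreprb : ∀ (z : A) i, b.repr z i = B (d i) z := by
    intro z i
    conv_rhs => rw [← b.sum_repr z]
    rw [map_sum]
    simp [hdb, Finset.sum_ite_eq']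
  have hexpb : ∀ z : A, ∑ i, B (d i) z • b i = z := by
    intro z
    simp_rw [← hreprb]
    exact b.sum_repr z
  have htr : ∀ M : A →ₗ[k] A, LinearMap.trace k A M = ∑ i, b.repr (M (b i)) i := by
    intro M
    rw [LinearMap.trace_eq_matrix_trace k b M]
    simp [Matrix.trace, Matrix.diag, LinearMap.toMatrix_apply]
  refine ⟨∑ i, b i ⊗ₜ[k] d i, ?_, ?_, ?_⟩
  · -- condition (i)
    intro x
    rw [map_sum, map_sum]
    have L : ∀ i, (rTensor A (mulLeft k x)) (b i ⊗ₜ[k] d i)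
        = ∑ j, B (d j) (x * b i) • (b j ⊗ₜ[k] d i) := by
      intro i
      rw [rTensor_tmul, mulLeft_apply]
      conv_lhs => rw [← hexpb (x * b i)]
      rw [TensorProduct.sum_tmul]
      simp_rw [TensorProduct.smul_tmul']
    have R : ∀ i, (lTensor A (mulRight k x)) (b i ⊗ₜ[k] d i)
        = ∑ j, B (d i * x) (b j) • (b i ⊗ₜ[k] d j) := by
      intro i
      rw [lTensor_tmul, mulRight_apply]
      conv_lhs => rw [← hexpd (d i * x)]
      rw [TensorProduct.tmul_sum]
      simp_rw [TensorProduct.tmul_smul]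
    simp_rw [L, R]
    rw [Finset.sum_comm]
    refine Finset.sum_congr rfl fun i _ => Finset.sum_congr rfl fun j _ => ?_
    congr 1
    exact (trB_assoc _ _ _).symm
  · -- condition (ii)
    have hmp : LinearMap.mul' k A (∑ i, b i ⊗ₜ[k] d i) = ∑ i, b i * d i := by
      rw [map_sum]; simp
    rw [hmp]
    have key : ∀ z : A, B z (∑ i, b i * d i) = B z 1 := by
      intro z
      rw [map_sum]
      have h1 : B z 1 = LinearMap.trace k A (mulLeft k z) := by
        rw [hB, trB_apply, mul_one]
      rw [h1, htr (mulLeft k z)]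
      refine Finset.sum_congr rfl fun i _ => ?_
      rw [← trB_assoc, hreprb]
      rw [trB_symm]
      rfl
    have hz : ∀ z : A, B z ((∑ i, b i * d i) - 1) = 0 := by
      intro z
      rw [map_sub, key, sub_self]
    have : ((∑ i, b i * d i) - 1 : A) = 0 := by
      apply hnd.1
      intro n
      rw [← trB_symm]
      exact hz n
    exact sub_eq_zero.mp this
  · -- condition (iii)
    rw [map_sum]
    have L : ∀ i, (TensorProduct.comm k A A) (b i ⊗ₜ[k] d i) = d i ⊗ₜ[k] b i :=
      fun i => rfl
    simp_rw [L]
    have E1 : ∀ i, (d i ⊗ₜ[k] b i : A ⊗[k] A)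
        = ∑ j, B (b i) (b j) • (d i ⊗ₜ[k] d j) := by
      intro i
      conv_lhs => rw [← hexpd (b i)]
      rw [TensorProduct.tmul_sum]
      simp_rw [TensorProduct.tmul_smul]
    have E2 : ∀ i, (b i ⊗ₜ[k] d i : A ⊗[k] A)
        = ∑ j, B (b i) (b j) • (d j ⊗ₜ[k] d i) := by
      intro i
      conv_lhs => rw [← hexpd (b i)]
      rw [TensorProduct.sum_tmul]
      simp_rw [TensorProduct.smul_tmul']
    simp_rw [E1, E2]
    rw [Finset.sum_comm]
    refine Finset.sum_congr rfl fun i _ => Finset.sum_congr rfl fun j _ => ?_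
    congr 1
    exact trB_symm _ _

end Existence

section Uniq

variable {k A : Type*} [Field k] [Ring A] [Algebra k A]

noncomputable def φAux (k A : Type*) [Field k] [Ring A] [Algebra k A] :
    (A ⊗[k] A) ≃ₗ[k] (Aᵐᵒᵖ ⊗[k] A) :=
  TensorProduct.congr (MulOpposite.opLinearEquiv k) (LinearEquiv.refl k A)

lemma φ_tmul (a b : A) : φAux k A (a ⊗ₜ[k] b) = MulOpposite.op a ⊗ₜ[k] b := rfl

lemma φ_symm_tmul (a b : A) :
    (φAux k A).symm (MulOpposite.op a ⊗ₜ[k] b) = a ⊗ₜ[k] b := rfl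

lemma mulRight_add' (u v : A) :
    mulRight k (u + v) = mulRight k u + mulRight k v := by
  ext x; simp [mul_add]

lemma U1 (e : A ⊗[k] A) (c dd : A) :
    φAux k A e * (MulOpposite.op c ⊗ₜ[k] dd)
      = φAux k A (lTensor A (mulRight k dd) (rTensor A (mulLeft k c) e)) := by
  induction e using TensorProduct.induction_on with
  | zero => simp
  | tmul a b =>
      rw [φ_tmul, rTensor_tmul, mulLeft_apply, lTensor_tmul, mulRight_apply, φ_tmul,
        Algebra.TensorProduct.tmul_mul_tmul, ← MulOpposite.op_mul]
  | add x y hx hy => simp only [map_add, add_mul, hx, hy]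

lemma U2 (e f : A ⊗[k] A)
    (he : ∀ x : A, rTensor A (mulLeft k x) e = lTensor A (mulRight k x) e) :
    φAux k A e * φAux k A f
      = φAux k A (lTensor A (mulRight k (LinearMap.mul' k A f)) e) := by
  induction f using TensorProduct.induction_on with
  | zero => simp
  | tmul c dd =>
      rw [φ_tmul, U1 e c dd, he c, ← lTensor_comp_apply, LinearMap.mul'_apply,
        mulRight_mul]
  | add x y hx hy =>
      rw [map_add, mul_add, hx, hy, map_add, mulRight_add', lTensor_add,
        LinearMap.add_apply, map_add]

lemma U3 (u v : A ⊗[k] A) :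
    (φAux k A).symm (φAux k A u * φAux k A v)
      = TensorProduct.comm k A A ((φAux k A).symm
          (φAux k A (TensorProduct.comm k A A v)
            * φAux k A (TensorProduct.comm k A A u))) := by
  induction u using TensorProduct.induction_on with
  | zero => simp
  | tmul a bb =>
      induction v using TensorProduct.induction_on with
      | zero => simp
      | tmul c dd =>
          rw [φ_tmul, φ_tmul, TensorProduct.comm_tmul, TensorProduct.comm_tmul,
            φ_tmul, φ_tmul, Algebra.TensorProduct.tmul_mul_tmul,
            Algebra.TensorProduct.tmul_mul_tmul, ← MulOpposite.op_mul,
            ← MulOpposite.op_mul, φ_symm_tmul, φ_symm_tmul, TensorProduct.comm_tmul]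
      | add x y hx hy =>
          simp only [map_add, mul_add, add_mul, hx, hy]
  | add x y hx hy =>
      simp only [map_add, mul_add, add_mul, hx, hy]

theorem symmSep_unique (e f : A ⊗[k] A)
    (he : IsSymmSepIdem k e) (hf : IsSymmSepIdem k f) : e = f := by
  obtain ⟨he1, he2, he3⟩ := he
  obtain ⟨hf1, hf2, hf3⟩ := hf
  have h1 : φAux k A e * φAux k A f = φAux k A e := by
    rw [U2 e f he1, hf2, mulRight_one, lTensor_id, LinearMap.id_apply]
  have h2 : φAux k A f * φAux k A e = φAux k A f := by
    rw [U2 f e hf1, he2, mulRight_one, lTensor_id, LinearMap.id_apply]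
  have h3 := U3 e f
  rw [hf3, he3, h1, h2] at h3
  simpa [hf3] using h3

end Uniq

/-- For a finite-dimensional semisimple algebra `A` over an algebraically closed field `k`
of characteristic zero there exists a unique symmetric separability idempotent. -/
theorem existsUnique_symmSepIdem (k A : Type*) [Field k] [IsAlgClosed k] [CharZero k]
    [Ring A] [Algebra k A] [FiniteDimensional k A] [IsSemisimpleRing A] :
    ∃! p : A ⊗[k] A, IsSymmSepIdem k p := by
  obtain ⟨p, hp⟩ := exists_isSymmSepIdem k A
  exact ⟨p, hp, fun q hq => symmSep_unique q p hq hp⟩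
end

section
/- Let k be an algebraically closed field of characteristic zero and A a finite-dimensional semisimple k-algebra. Let (p¹_i)_i be a k-basis of A and let (p²_i)_i be the dual basis of A with respect to the nondegenerate trace pairing T(a,b) = tr(L_{ab}), i.e. T(p¹_i, p²_j) = δ_{ij}. Then the element Σ_i p¹_i ⊗ p²_i ∈ A ⊗ A is a symmetric separability idempotent for A: it satisfies (i) (x·p¹) ⊗ p² = p¹ ⊗ (p²·x) for all x ∈ A, (ii) Σ p¹·p² = 1, and (iii) invariance under the flip of tensor factors. -/
open scoped TensorProduct

noncomputable def myTL (k A : Type*) [Field k] [Ring A] [Algebra k A] : A →ₗ[k] k :=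
  (LinearMap.trace k A).comp (LinearMap.mul k A)

section Aux
variable {k A : Type*} [Field k] [Ring A] [Algebra k A] [FiniteDimensional k A]

omit [FiniteDimensional k A] in
lemma myTL_cyc (a b : A) : myTL k A (a * b) = myTL k A (b * a) := by
  show LinearMap.trace k A (LinearMap.mul k A (a*b)) = LinearMap.trace k A (LinearMap.mul k A (b*a))
  have h : LinearMap.mul k A = (Algebra.lmul k A).toLinearMap := rfl
  rw [h]
  simp only [AlgHom.toLinearMap_apply, map_mul]
  exact LinearMap.trace_mul_comm k _ _

variable {ι : Type*} [Fintype ι] [DecidableEq ι] (p₁ : Module.Basis ι k A) (p₂ : ι → A)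
  (hd : ∀ i j : ι, myTL k A (p₁ i * p₂ j) = if i = j then 1 else 0)

include hd

omit [FiniteDimensional k A] in
lemma myRepr (a : A) (i : ι) : p₁.repr a i = myTL k A (a * p₂ i) := by
  calc p₁.repr a i = ∑ j, p₁.repr a j * (if j = i then 1 else 0) := by simp
    _ = ∑ j, p₁.repr a j * myTL k A (p₁ j * p₂ i) := by simp_rw [hd]
    _ = myTL k A ((∑ j, p₁.repr a j • p₁ j) * p₂ i) := by
        rw [Finset.sum_mul, map_sum]
        simp_rw [smul_mul_assoc, map_smul, smul_eq_mul]
    _ = myTL k A (a * p₂ i) := by rw [Module.Basis.sum_repr]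

omit [FiniteDimensional k A] in
lemma myE1 (a : A) : a = ∑ i, myTL k A (a * p₂ i) • p₁ i := by
  simp_rw [← myRepr p₁ p₂ hd]
  exact (Module.Basis.sum_repr p₁ a).symm

omit [FiniteDimensional k A] in
lemma myTr (x : A) : myTL k A x = myTL k A (x * ∑ i, p₁ i * p₂ i) := by
  have h1 : myTL k A x = LinearMap.trace k A (LinearMap.mulLeft k x) := rfl
  rw [h1, LinearMap.trace_eq_matrix_trace k p₁, Matrix.trace]
  simp_rw [Matrix.diag, LinearMap.toMatrix_apply, LinearMap.mulLeft_apply,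
    myRepr p₁ p₂ hd, Finset.mul_sum, map_sum, mul_assoc]

omit [FiniteDimensional k A] in
lemma myLI : LinearIndependent k p₂ := by
  rw [Fintype.linearIndependent_iff]
  intro g hg j
  have := congrArg (fun a => myTL k A (p₁ j * a)) hg
  simp only [Finset.mul_sum, mul_smul_comm, map_sum, map_smul, smul_eq_mul, hd, mul_zero] at this
  simpa using this

noncomputable def myB2 : Module.Basis ι k A :=
  Module.Basis.mk (myLI p₁ p₂ hd)
    ((myLI p₁ p₂ hd).span_eq_top_of_card_eq_finrank'
      (by rw [Module.finrank_eq_card_basis p₁])).ge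

lemma myE2 (a : A) : a = ∑ i, myTL k A (p₁ i * a) • p₂ i := by
  have key : (∑ i, LinearMap.smulRight ((myTL k A).comp (LinearMap.mulLeft k (p₁ i))) (p₂ i))
      = (LinearMap.id : A →ₗ[k] A) := by
    apply Module.Basis.ext (myB2 p₁ p₂ hd)
    intro j
    have hb : ∀ i, (myB2 p₁ p₂ hd) i = p₂ i := fun i => Module.Basis.mk_apply _ _ i
    simp only [LinearMap.sum_apply, LinearMap.smulRight_apply, LinearMap.comp_apply,
      LinearMap.mulLeft_apply, LinearMap.id_apply, hb, hd]
    simp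
  have := DFunLike.congr_fun key a
  simpa [LinearMap.sum_apply] using this.symm

end Aux

/-- If `(p¹_i)` is a basis of a finite-dimensional semisimple algebra `A` over an algebraically
closed field `k` of characteristic zero and `(p²_i)` is the dual basis with respect to the
trace pairing `T(a,b) = tr(L_{ab})`, then `Σ_i p¹_i ⊗ p²_i` is a symmetric separability
idempotent for `A`. -/
theorem isSymmSepIdem_of_dualBases (k A : Type*) [Field k] [IsAlgClosed k] [CharZero k]
    [Ring A] [Algebra k A] [FiniteDimensional k A] [IsSemisimpleRing A]
    {ι : Type*} [Fintype ι] [DecidableEq ι] (p₁ : Module.Basis ι k A) (p₂ : ι → A)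
    (hdual : ∀ i j : ι,
      LinearMap.trace k A (LinearMap.mulLeft k (p₁ i * p₂ j)) = if i = j then 1 else 0) :
    IsSymmSepIdem k (∑ i : ι, p₁ i ⊗ₜ[k] p₂ i) := by
  have hd : ∀ i j : ι, myTL k A (p₁ i * p₂ j) = if i = j then 1 else 0 := hdual
  refine ⟨?_, ?_, ?_⟩
  · -- (i)
    intro x
    simp only [map_sum, LinearMap.rTensor_tmul, LinearMap.lTensor_tmul,
      LinearMap.mulLeft_apply, LinearMap.mulRight_apply]
    calc ∑ i, (x * p₁ i) ⊗ₜ[k] p₂ i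
        = ∑ i, ∑ j, myTL k A (x * p₁ i * p₂ j) • (p₁ j ⊗ₜ[k] p₂ i) := by
          refine Finset.sum_congr rfl fun i _ => ?_
          conv_lhs => rw [myE1 p₁ p₂ hd (x * p₁ i)]
          rw [TensorProduct.sum_tmul]
          simp_rw [TensorProduct.smul_tmul']
      _ = ∑ i, ∑ j, myTL k A (p₁ j * (p₂ i * x)) • (p₁ i ⊗ₜ[k] p₂ j) := by
          rw [Finset.sum_comm]
          refine Finset.sum_congr rfl fun i _ => Finset.sum_congr rfl fun j _ => ?_
          congr 1
          rw [mul_assoc, myTL_cyc, mul_assoc]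
      _ = ∑ i, p₁ i ⊗ₜ[k] (p₂ i * x) := by
          refine Finset.sum_congr rfl fun i _ => ?_
          conv_rhs => rw [myE2 p₁ p₂ hd (p₂ i * x)]
          rw [TensorProduct.tmul_sum]
          simp_rw [TensorProduct.tmul_smul]
  · -- (ii)
    simp only [map_sum, LinearMap.mul'_apply]
    calc ∑ i, p₁ i * p₂ i
        = ∑ j, myTL k A (p₁ j * ∑ i, p₁ i * p₂ i) • p₂ j := myE2 p₁ p₂ hd _
      _ = ∑ j, myTL k A (p₁ j * 1) • p₂ j := by
          refine Finset.sum_congr rfl fun j _ => ?_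
          rw [← myTr p₁ p₂ hd, mul_one]
      _ = 1 := (myE2 p₁ p₂ hd 1).symm
  · -- (iii)
    have hI : ∀ j l : ι, (∑ i, myTL k A (p₂ i * p₂ j) * myTL k A (p₁ l * p₁ i))
        = if l = j then 1 else 0 := by
      intro j l
      calc ∑ i, myTL k A (p₂ i * p₂ j) * myTL k A (p₁ l * p₁ i)
          = ∑ i, myTL k A (p₁ i * p₁ l) * myTL k A (p₂ j * p₂ i) := by
            refine Finset.sum_congr rfl fun i _ => ?_
            rw [myTL_cyc (p₂ i), myTL_cyc (p₁ l), mul_comm]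
        _ = myTL k A (p₂ j * ∑ i, myTL k A (p₁ i * p₁ l) • p₂ i) := by
            rw [Finset.mul_sum]
            simp_rw [mul_smul_comm, map_sum, map_smul, smul_eq_mul]
        _ = myTL k A (p₂ j * p₁ l) := by rw [← myE2 p₁ p₂ hd (p₁ l)]
        _ = if l = j then 1 else 0 := by rw [myTL_cyc, hd]
    simp only [map_sum, TensorProduct.comm_tmul]
    calc ∑ i, p₂ i ⊗ₜ[k] p₁ i
        = ∑ i, ∑ j, ∑ l, (myTL k A (p₂ i * p₂ j) * myTL k A (p₁ l * p₁ i))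
            • (p₁ j ⊗ₜ[k] p₂ l) := by
          refine Finset.sum_congr rfl fun i _ => ?_
          conv_lhs => rw [myE1 p₁ p₂ hd (p₂ i), myE2 p₁ p₂ hd (p₁ i)]
          rw [TensorProduct.sum_tmul]
          simp_rw [TensorProduct.tmul_sum, ← TensorProduct.smul_tmul',
            TensorProduct.tmul_smul, smul_smul]
      _ = ∑ j, ∑ l, (∑ i, myTL k A (p₂ i * p₂ j) * myTL k A (p₁ l * p₁ i))
            • (p₁ j ⊗ₜ[k] p₂ l) := by
          rw [Finset.sum_comm]
          refine Finset.sum_congr rfl fun j _ => ?_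
          rw [Finset.sum_comm]
          refine Finset.sum_congr rfl fun l _ => ?_
          rw [Finset.sum_smul]
      _ = ∑ j, ∑ l, (if l = j then (1:k) else 0) • (p₁ j ⊗ₜ[k] p₂ l) := by simp_rw [hI]
      _ = ∑ i, p₁ i ⊗ₜ[k] p₂ i := by simp
end

section
/- Let H be a finite-dimensional Hopf algebra over a field k whose antipode S is involutive (S ∘ S = id_H), and let ℓ ∈ H be a two-sided normalized integral, i.e. x·ℓ = ε(x)·ℓ = ℓ·x for all x ∈ H and ε(ℓ) = 1. Then the element Σ ℓ₍₁₎ ⊗ S(ℓ₍₂₎) = ((id_H ⊗ S) ∘ Δ)(ℓ) ∈ H ⊗ H is a symmetric separability idempotent for the algebra underlying H: it satisfies (i) (x·ℓ₍₁₎) ⊗ S(ℓ₍₂₎) = ℓ₍₁₎ ⊗ (S(ℓ₍₂₎)·x) for all x ∈ H, (ii) Σ ℓ₍₁₎·S(ℓ₍₂₎) = 1, and (iii) Σ ℓ₍₁₎ ⊗ S(ℓ₍₂₎) = Σ S(ℓ₍₂₎) ⊗ ℓ₍₁₎. -/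
open scoped TensorProduct
open scoped Coalgebra

/- ### Auxiliary convolution-algebra machinery -/

section Conv
variable {k : Type*} [CommSemiring k] {C : Type*} [AddCommMonoid C] [Module k C] [Coalgebra k C]
  {A : Type*} [Semiring A] [Algebra k A]

noncomputable def conv (f g : C →ₗ[k] A) : C →ₗ[k] A :=
  LinearMap.mul' k A ∘ₗ TensorProduct.map f g ∘ₗ Coalgebra.comul

noncomputable def cunit : C →ₗ[k] A := Algebra.linearMap k A ∘ₗ Coalgebra.counit

lemma conv_repr (f g : C →ₗ[k] A) {a : C} (r : Coalgebra.Repr k a (C × C)) :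
    conv f g a = ∑ i ∈ r.index, f (r.left i) * g (r.right i) := by
  simp only [conv, LinearMap.comp_apply, ← r.eq, map_sum, TensorProduct.map_tmul,
    LinearMap.mul'_apply]

lemma counit_left_smul {a : C} (r : Coalgebra.Repr k a (C × C)) :
    ∑ i ∈ r.index, Coalgebra.counit (R := k) (r.left i) • r.right i = a := by
  have h := congrArg (TensorProduct.lid k C) (Coalgebra.sum_counit_tmul_eq r)
  simp only [map_sum, TensorProduct.lid_tmul, one_smul] at h
  exact h

lemma counit_right_smul {a : C} (r : Coalgebra.Repr k a (C × C)) :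
    ∑ i ∈ r.index, Coalgebra.counit (R := k) (r.right i) • r.left i = a := by
  have h := congrArg (TensorProduct.rid k C) (Coalgebra.sum_tmul_counit_eq r)
  simp only [map_sum, TensorProduct.rid_tmul, one_smul] at h
  exact h

lemma one_conv (f : C →ₗ[k] A) : conv (cunit) f = f := by
  ext a
  rw [conv_repr _ _ (ℛ k a)]
  conv_rhs => rw [← counit_left_smul (ℛ k a)]
  rw [map_sum]
  simp only [cunit, LinearMap.comp_apply, Algebra.linearMap_apply, ← Algebra.smul_def, map_smul]

lemma conv_one (f : C →ₗ[k] A) : conv f (cunit) = f := by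
  ext a
  rw [conv_repr _ _ (ℛ k a)]
  conv_rhs => rw [← counit_right_smul (ℛ k a)]
  rw [map_sum]
  simp only [cunit, LinearMap.comp_apply, Algebra.linearMap_apply, map_smul]
  refine Finset.sum_congr rfl fun i _ => ?_
  rw [← Algebra.commutes, ← Algebra.smul_def]

lemma conv_assoc (f g h : C →ₗ[k] A) : conv (conv f g) h = conv f (conv g h) := by
  ext a
  set r := ℛ k a
  set r1 : (i : r.ι) → Coalgebra.Repr k (r.left i) (C × C) := fun i => ℛ k (r.left i)
  set r2 : (i : r.ι) → Coalgebra.Repr k (r.right i) (C × C) := fun i => ℛ k (r.right i)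
  have key := Coalgebra.sum_tmul_tmul_eq r r1 r2
  have key2 := congrArg (LinearMap.mul' k A ∘ₗ
    TensorProduct.map f (LinearMap.mul' k A ∘ₗ TensorProduct.map g h)) key
  simp only [map_sum, LinearMap.comp_apply, TensorProduct.map_tmul, LinearMap.mul'_apply] at key2
  rw [conv_repr _ _ r, conv_repr _ _ r]
  calc ∑ i ∈ r.index, conv f g (r.left i) * h (r.right i)
      = ∑ i ∈ r.index, ∑ j ∈ (r1 i).index,
          f ((r1 i).left j) * (g ((r1 i).right j) * h (r.right i)) := by
        refine Finset.sum_congr rfl fun i _ => ?_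
        rw [conv_repr _ _ (r1 i), Finset.sum_mul]
        exact Finset.sum_congr rfl fun j _ => mul_assoc _ _ _
    _ = ∑ i ∈ r.index, ∑ j ∈ (r2 i).index,
          f (r.left i) * (g ((r2 i).left j) * h ((r2 i).right j)) := key2
    _ = ∑ i ∈ r.index, f (r.left i) * conv g h (r.right i) := by
        refine Finset.sum_congr rfl fun i _ => ?_
        rw [conv_repr _ _ (r2 i), Finset.mul_sum]

lemma conv_inv_unique {f g g' : C →ₗ[k] A} (h1 : conv f g = cunit) (h2 : conv g' f = cunit) :
    g' = g := by
  have : conv g' (conv f g) = conv (conv g' f) g := (conv_assoc g' f g).symm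
  rw [h1, h2, conv_one, one_conv] at this
  exact this

lemma conv_add_left (f f' g : C →ₗ[k] A) : conv (f + f') g = conv f g + conv f' g := by
  simp only [conv, TensorProduct.map_add_left, LinearMap.add_comp, LinearMap.comp_add]

lemma conv_add_right (f g g' : C →ₗ[k] A) : conv f (g + g') = conv f g + conv f g' := by
  simp only [conv, TensorProduct.map_add_right, LinearMap.add_comp, LinearMap.comp_add]

lemma conv_smul_left (c : k) (f g : C →ₗ[k] A) : conv (c • f) g = c • conv f g := by
  simp only [conv, TensorProduct.map_smul_left, LinearMap.smul_comp, LinearMap.comp_smul]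

lemma conv_smul_right (c : k) (f g : C →ₗ[k] A) : conv f (c • g) = c • conv f g := by
  simp only [conv, TensorProduct.map_smul_right, LinearMap.smul_comp, LinearMap.comp_smul]

lemma conv_zero_left (g : C →ₗ[k] A) : conv (0 : C →ₗ[k] A) g = 0 := by
  simp only [conv, TensorProduct.map_zero_left, LinearMap.zero_comp, LinearMap.comp_zero]

lemma conv_zero_right (f : C →ₗ[k] A) : conv f (0 : C →ₗ[k] A) = 0 := by
  simp only [conv, TensorProduct.map_zero_right, LinearMap.zero_comp, LinearMap.comp_zero]

end Conv

lemma cunit_apply {k : Type*} [CommSemiring k] {C : Type*} [AddCommMonoid C] [Module k C]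
    [Coalgebra k C] {A : Type*} [Semiring A] [Algebra k A] (a : C) :
    cunit (k := k) (C := C) (A := A) a = algebraMap k A (Coalgebra.counit (R := k) a) := rfl

/-- Type synonym of `H →ₗ[k] H` carrying the convolution algebra structure. -/
def ConvE (k H : Type*) [CommSemiring k] [AddCommMonoid H] [Module k H] := H →ₗ[k] H

section ConvE
variable (k H : Type*) [CommSemiring k] [Semiring H] [Bialgebra k H]

instance : AddCommMonoid (ConvE k H) := inferInstanceAs (AddCommMonoid (H →ₗ[k] H))
instance : Module k (ConvE k H) := inferInstanceAs (Module k (H →ₗ[k] H))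

noncomputable instance : Semiring (ConvE k H) :=
  { (inferInstance : AddCommMonoid (ConvE k H)) with
    mul := fun f g => conv (k := k) (C := H) (A := H) f g
    one := cunit (k := k) (C := H) (A := H)
    mul_assoc := conv_assoc
    one_mul := one_conv
    mul_one := conv_one
    left_distrib := fun f g g' => conv_add_right f g g'
    right_distrib := fun f f' g => conv_add_left f f' g
    zero_mul := conv_zero_left
    mul_zero := conv_zero_right }

noncomputable instance : Algebra k (ConvE k H) :=
  Algebra.ofModule (fun c f g => conv_smul_left c f g) (fun c f g => conv_smul_right c f g)

lemma ConvE.mul_def (f g : ConvE k H) :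
    f * g = conv (k := k) (C := H) (A := H) f g := rfl

lemma ConvE.one_def : (1 : ConvE k H) = cunit (k := k) (C := H) (A := H) := rfl

end ConvE

section ConvE2
variable {k H : Type*} [CommSemiring k] [Semiring H] [Bialgebra k H]

def ConvE.toMap (f : ConvE k H) : H →ₗ[k] H := f

lemma ConvE.ext {f g : ConvE k H} (h : ConvE.toMap f = ConvE.toMap g) : f = g := h

lemma ConvE.toMap_sum {ι : Type*} (s : Finset ι) (f : ι → ConvE k H) :
    ConvE.toMap (∑ i ∈ s, f i) = ∑ i ∈ s, ConvE.toMap (f i) := rfl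

lemma ConvE.toMap_mul (f g : ConvE k H) :
    ConvE.toMap (f * g) = conv (k := k) (C := H) (A := H) (ConvE.toMap f) (ConvE.toMap g) := rfl

lemma ConvE.toMap_one : ConvE.toMap (1 : ConvE k H) = cunit (k := k) (C := H) (A := H) := rfl

lemma ConvE.toMap_smul (c : k) (f : ConvE k H) :
    ConvE.toMap (c • f) = c • ConvE.toMap f := rfl

lemma cunitE_apply (x y : H) :
    ConvE.toMap (cunit (k := k) (C := H) (A := ConvE k H) x) y
      = Coalgebra.counit (R := k) x • algebraMap k H (Coalgebra.counit (R := k) y) := by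
  rw [cunit_apply, Algebra.algebraMap_eq_smul_one, ConvE.toMap_smul]
  rw [LinearMap.smul_apply, ConvE.toMap_one, cunit_apply]

end ConvE2

section AntipodeMul
variable {k H : Type*} [CommSemiring k] [Semiring H] [HopfAlgebra k H]

local notation "S" => HopfAlgebra.antipode (R := k) (A := H)
local notation "ε" => Coalgebra.counit (R := k)

lemma antipode_mul_sum_of_comul_eq {z : H} {ι κ : Type*} (s : Finset ι) (t : Finset κ)
    (u v : ι → κ → H)
    (h : Coalgebra.comul (R := k) z = ∑ i ∈ s, ∑ j ∈ t, u i j ⊗ₜ[k] v i j) :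
    ∑ i ∈ s, ∑ j ∈ t, S (u i j) * v i j = algebraMap k H (ε z) := by
  have h2 := HopfAlgebra.mul_antipode_rTensor_comul_apply (R := k) z
  rw [h] at h2
  simpa [map_sum] using h2

lemma comul_mul_repr (x y : H) (rx : Coalgebra.Repr k x (H × H)) (ry : Coalgebra.Repr k y (H × H)) :
    Coalgebra.comul (R := k) (x * y) = ∑ i ∈ rx.index, ∑ j ∈ ry.index,
      (rx.left i * ry.left j) ⊗ₜ[k] (rx.right i * ry.right j) := by
  rw [Bialgebra.comul_mul, ← rx.eq, ← ry.eq, Finset.sum_mul_sum]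
  simp [Algebra.TensorProduct.tmul_mul_tmul]

noncomputable def mmap : H →ₗ[k] ConvE k H := LinearMap.mul k H
noncomputable def gmap : H →ₗ[k] ConvE k H :=
  (((LinearMap.mul k H).comp (HopfAlgebra.antipode (R := k))).flip).comp
    (HopfAlgebra.antipode (R := k))
noncomputable def g'map : H →ₗ[k] ConvE k H :=
  (LinearMap.mul k H).compr₂ (HopfAlgebra.antipode (R := k))

lemma mmap_apply (x y : H) : ConvE.toMap (mmap (k := k) x) y = x * y := rfl
lemma gmap_apply (x y : H) : ConvE.toMap (gmap (k := k) x) y = S y * S x := rfl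
lemma g'map_apply (x y : H) : ConvE.toMap (g'map (k := k) x) y = S (x * y) := rfl

lemma claimA : conv (mmap (k := k) (H := H)) gmap = cunit := by
  refine LinearMap.ext fun x => ConvE.ext (LinearMap.ext fun y => ?_)
  have hxy := congrArg (fun F : ConvE k H => ConvE.toMap F y)
    (conv_repr (mmap (k := k) (H := H)) gmap (ℛ k x))
  simp only [ConvE.toMap_sum, LinearMap.sum_apply] at hxy
  rw [hxy, cunitE_apply]
  calc
    ∑ i ∈ (ℛ k x).index, ConvE.toMap (mmap ((ℛ k x).left i) * gmap ((ℛ k x).right i)) y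
      = ∑ i ∈ (ℛ k x).index, ∑ j ∈ (ℛ k y).index,
          (ℛ k x).left i * ((ℛ k y).left j * S ((ℛ k y).right j)) * S ((ℛ k x).right i) := by
        refine Finset.sum_congr rfl fun i _ => ?_
        rw [ConvE.toMap_mul, conv_repr _ _ (ℛ k y)]
        refine Finset.sum_congr rfl fun j _ => ?_
        rw [mmap_apply, gmap_apply]
        rw [mul_assoc, mul_assoc, mul_assoc]
    _ = ∑ i ∈ (ℛ k x).index,
          (ℛ k x).left i * algebraMap k H (ε y) * S ((ℛ k x).right i) := by
        refine Finset.sum_congr rfl fun i _ => ?_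
        rw [← Finset.sum_mul, ← Finset.mul_sum, HopfAlgebra.sum_mul_antipode_eq_algebraMap_counit (ℛ k y)]
    _ = ε y • ∑ i ∈ (ℛ k x).index, (ℛ k x).left i * S ((ℛ k x).right i) := by
        rw [Finset.smul_sum]
        refine Finset.sum_congr rfl fun i _ => ?_
        rw [← Algebra.commutes, mul_assoc, ← Algebra.smul_def]
    _ = ε x • algebraMap k H (ε y) := by
        rw [HopfAlgebra.sum_mul_antipode_eq_algebraMap_counit (ℛ k x), Algebra.smul_def, Algebra.smul_def,
          ← map_mul (algebraMap k H), ← map_mul (algebraMap k H), mul_comm]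

lemma claimB : conv (g'map (k := k) (H := H)) mmap = cunit := by
  refine LinearMap.ext fun x => ConvE.ext (LinearMap.ext fun y => ?_)
  have hxy := congrArg (fun F : ConvE k H => ConvE.toMap F y)
    (conv_repr (g'map (k := k) (H := H)) mmap (ℛ k x))
  simp only [ConvE.toMap_sum, LinearMap.sum_apply] at hxy
  rw [hxy, cunitE_apply]
  calc
    ∑ i ∈ (ℛ k x).index, ConvE.toMap (g'map ((ℛ k x).left i) * mmap ((ℛ k x).right i)) y
      = ∑ i ∈ (ℛ k x).index, ∑ j ∈ (ℛ k y).index,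
          S ((ℛ k x).left i * (ℛ k y).left j) * ((ℛ k x).right i * (ℛ k y).right j) := by
        refine Finset.sum_congr rfl fun i _ => ?_
        rw [ConvE.toMap_mul, conv_repr _ _ (ℛ k y)]
        refine Finset.sum_congr rfl fun j _ => ?_
        rw [g'map_apply, mmap_apply]
    _ = algebraMap k H (ε (x * y)) :=
        antipode_mul_sum_of_comul_eq _ _ _ _ (comul_mul_repr x y (ℛ k x) (ℛ k y))
    _ = ε x • algebraMap k H (ε y) := by
        rw [Bialgebra.counit_mul, map_mul, ← Algebra.smul_def]

theorem my_antipode_mul (x y : H) : S (x * y) = S y * S x := by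
  have h := conv_inv_unique (f := mmap (k := k) (H := H)) claimA claimB
  have := congrArg (fun F : H →ₗ[k] ConvE k H => ConvE.toMap (F x) y) h
  simpa only [g'map_apply, gmap_apply] using this

end AntipodeMul

section ComulAntipode
variable {k H : Type*} [CommSemiring k] [Semiring H] [HopfAlgebra k H]

local notation "S" => HopfAlgebra.antipode (R := k) (A := H)
local notation "ε" => Coalgebra.counit (R := k)

noncomputable def inc1 : H →ₗ[k] H ⊗[k] H := Algebra.TensorProduct.includeLeft.toLinearMap
noncomputable def inc2 : H →ₗ[k] H ⊗[k] H := Algebra.TensorProduct.includeRight.toLinearMap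

lemma conv_inc1_inc2 : conv (inc1 (k := k) (H := H)) inc2 = Coalgebra.comul := by
  ext a
  rw [conv_repr _ _ (ℛ k a), ← (ℛ k a).eq]
  refine Finset.sum_congr rfl fun i _ => ?_
  simp [inc1, inc2, Algebra.TensorProduct.tmul_mul_tmul]

lemma conv_inc2_inc2S :
    conv (inc2 (k := k) (H := H)) (inc2 ∘ₗ HopfAlgebra.antipode (R := k)) = cunit := by
  ext a
  rw [conv_repr _ _ (ℛ k a)]
  simp only [inc2, LinearMap.comp_apply, AlgHom.toLinearMap_apply,
    Algebra.TensorProduct.includeRight_apply, Algebra.TensorProduct.tmul_mul_tmul, one_mul]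
  rw [← TensorProduct.tmul_sum, HopfAlgebra.sum_mul_antipode_eq_algebraMap_counit (ℛ k a), cunit_apply,
    Algebra.algebraMap_eq_smul_one (R := k) (A := H),
    Algebra.algebraMap_eq_smul_one (R := k) (A := H ⊗[k] H),
    Algebra.TensorProduct.one_def, TensorProduct.tmul_smul]

lemma conv_inc1_inc1S :
    conv (inc1 (k := k) (H := H)) (inc1 ∘ₗ HopfAlgebra.antipode (R := k)) = cunit := by
  ext a
  rw [conv_repr _ _ (ℛ k a)]
  simp only [inc1, LinearMap.comp_apply, AlgHom.toLinearMap_apply,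
    Algebra.TensorProduct.includeLeft_apply, Algebra.TensorProduct.tmul_mul_tmul, one_mul]
  rw [← TensorProduct.sum_tmul, HopfAlgebra.sum_mul_antipode_eq_algebraMap_counit (ℛ k a), cunit_apply,
    Algebra.TensorProduct.algebraMap_apply]

lemma conv_comulS_comul :
    conv ((Coalgebra.comul (R := k) (A := H)) ∘ₗ HopfAlgebra.antipode (R := k))
      Coalgebra.comul = cunit := by
  ext a
  rw [conv_repr _ _ (ℛ k a)]
  simp only [LinearMap.comp_apply]
  calc
    ∑ i ∈ (ℛ k a).index,
        Coalgebra.comul (R := k) (S ((ℛ k a).left i)) * Coalgebra.comul ((ℛ k a).right i)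
      = ∑ i ∈ (ℛ k a).index,
          Coalgebra.comul (R := k) (S ((ℛ k a).left i) * (ℛ k a).right i) := by
        refine Finset.sum_congr rfl fun i _ => (Bialgebra.comul_mul _ _).symm
    _ = Coalgebra.comul (R := k) (algebraMap k H (ε a)) := by
        rw [← map_sum, HopfAlgebra.sum_antipode_mul_eq_algebraMap_counit (ℛ k a)]
    _ = cunit a := by rw [Bialgebra.comul_algebraMap, cunit_apply]

lemma conv_comul_G :
    conv (Coalgebra.comul (R := k) (A := H))
      (conv (inc2 ∘ₗ HopfAlgebra.antipode (R := k)) (inc1 ∘ₗ HopfAlgebra.antipode (R := k)))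
      = cunit := by
  rw [← conv_inc1_inc2, conv_assoc,
    ← conv_assoc inc2 (inc2 ∘ₗ HopfAlgebra.antipode (R := k)) (inc1 ∘ₗ HopfAlgebra.antipode (R := k)),
    conv_inc2_inc2S, one_conv, conv_inc1_inc1S]

lemma comulS_eq_G :
    (Coalgebra.comul (R := k) (A := H)) ∘ₗ HopfAlgebra.antipode (R := k)
      = conv (inc2 ∘ₗ HopfAlgebra.antipode (R := k)) (inc1 ∘ₗ HopfAlgebra.antipode (R := k)) :=
  conv_inv_unique conv_comul_G conv_comulS_comul

lemma comul_antipode_repr {a : H} (r : Coalgebra.Repr k a (H × H)) :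
    Coalgebra.comul (R := k) (S a)
      = ∑ i ∈ r.index, S (r.right i) ⊗ₜ[k] S (r.left i) := by
  have h := congrArg (fun F : H →ₗ[k] H ⊗[k] H => F a) comulS_eq_G
  simp only [LinearMap.comp_apply] at h
  rw [h, conv_repr _ _ r]
  refine Finset.sum_congr rfl fun i _ => ?_
  simp [inc1, inc2, Algebra.TensorProduct.tmul_mul_tmul]

end ComulAntipode

section Casimir
variable {k H : Type*} [CommSemiring k] [Semiring H] [HopfAlgebra k H]

local notation "S" => HopfAlgebra.antipode (R := k) (A := H)
local notation "ε" => Coalgebra.counit (R := k)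

lemma conv_inc2S_inc2 :
    conv (inc2 ∘ₗ HopfAlgebra.antipode (R := k)) (inc2 (k := k) (H := H)) = cunit := by
  ext a
  rw [conv_repr _ _ (ℛ k a)]
  simp only [inc2, LinearMap.comp_apply, AlgHom.toLinearMap_apply,
    Algebra.TensorProduct.includeRight_apply, Algebra.TensorProduct.tmul_mul_tmul, one_mul]
  rw [← TensorProduct.tmul_sum, HopfAlgebra.sum_antipode_mul_eq_algebraMap_counit (ℛ k a), cunit_apply,
    Algebra.algebraMap_eq_smul_one (R := k) (A := H),
    Algebra.algebraMap_eq_smul_one (R := k) (A := H ⊗[k] H),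
    Algebra.TensorProduct.one_def, TensorProduct.tmul_smul]

lemma casimir (ℓ : H) (hleft : ∀ x : H, x * ℓ = ε x • ℓ) (x : H) :
    LinearMap.rTensor H (LinearMap.mulLeft k x)
        (LinearMap.lTensor H (HopfAlgebra.antipode (R := k)) (Coalgebra.comul (R := k) ℓ))
      = LinearMap.lTensor H (LinearMap.mulRight k x)
        (LinearMap.lTensor H (HopfAlgebra.antipode (R := k)) (Coalgebra.comul (R := k) ℓ)) := by
  set p : H ⊗[k] H :=
    LinearMap.lTensor H (HopfAlgebra.antipode (R := k)) (Coalgebra.comul (R := k) ℓ) with hp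
  set rl : Coalgebra.Repr k ℓ (H × H) := ℛ k ℓ with hrl
  have hpe : p = ∑ j ∈ rl.index, rl.left j ⊗ₜ[k] S (rl.right j) := by
    rw [hp, ← rl.eq, map_sum]; simp
  set φ : H →ₗ[k] H ⊗[k] H := (LinearMap.mulRight k p) ∘ₗ inc1 with hφ
  set ψ : H →ₗ[k] H ⊗[k] H := (LinearMap.mulLeft k p) ∘ₗ inc2 with hψ
  set εp : H →ₗ[k] H ⊗[k] H :=
    (LinearMap.toSpanSingleton k (H ⊗[k] H) p) ∘ₗ Coalgebra.counit with hεp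
  have claim1 : conv φ (inc2 ∘ₗ HopfAlgebra.antipode (R := k)) = εp := by
    ext a
    rw [conv_repr _ _ (ℛ k a)]
    have step1 : ∀ i ∈ (ℛ k a).index,
        φ ((ℛ k a).left i) * (inc2 ∘ₗ HopfAlgebra.antipode (R := k)) ((ℛ k a).right i)
          = ∑ j ∈ rl.index, ((ℛ k a).left i * rl.left j)
              ⊗ₜ[k] S ((ℛ k a).right i * rl.right j) := by
      intro i _
      rw [hφ]
      simp only [LinearMap.comp_apply, inc1, inc2, AlgHom.toLinearMap_apply,
        Algebra.TensorProduct.includeLeft_apply, Algebra.TensorProduct.includeRight_apply,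
        LinearMap.mulRight_apply, hpe, Finset.mul_sum, Finset.sum_mul]
      refine Finset.sum_congr rfl fun j _ => ?_
      rw [Algebra.TensorProduct.tmul_mul_tmul, Algebra.TensorProduct.tmul_mul_tmul,
        one_mul, mul_one, my_antipode_mul]
    rw [Finset.sum_congr rfl step1]
    have key : ∑ i ∈ (ℛ k a).index, ∑ j ∈ rl.index,
        ((ℛ k a).left i * rl.left j) ⊗ₜ[k] S ((ℛ k a).right i * rl.right j)
          = LinearMap.lTensor H (HopfAlgebra.antipode (R := k))
              (Coalgebra.comul (R := k) (a * ℓ)) := by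
      rw [comul_mul_repr a ℓ (ℛ k a) rl, map_sum]
      simp only [map_sum, LinearMap.lTensor_tmul]
    rw [key, hleft a, LinearMap.map_smul, LinearMap.map_smul, ← hp, hεp]
    simp [LinearMap.toSpanSingleton_apply]
  have claim2 : conv εp inc2 = ψ := by
    ext a
    rw [conv_repr _ _ (ℛ k a)]
    rw [hψ]
    simp only [hεp, LinearMap.comp_apply, LinearMap.toSpanSingleton_apply, inc2,
      AlgHom.toLinearMap_apply, Algebra.TensorProduct.includeRight_apply,
      LinearMap.mulLeft_apply]
    conv_rhs => rw [← counit_left_smul (ℛ k a)]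
    rw [TensorProduct.tmul_sum, Finset.mul_sum]
    refine Finset.sum_congr rfl fun i _ => ?_
    rw [TensorProduct.tmul_smul, mul_smul_comm, smul_mul_assoc]
  have hφψ : φ = ψ := by
    rw [← conv_one (f := φ), ← conv_inc2S_inc2,
      ← conv_assoc φ (inc2 ∘ₗ HopfAlgebra.antipode (R := k)) inc2, claim1, claim2]
  have h1 : LinearMap.rTensor H (LinearMap.mulLeft k x) p = φ x := by
    rw [hφ, hpe]
    simp only [map_sum, LinearMap.rTensor_tmul, LinearMap.mulLeft_apply,
      LinearMap.comp_apply, inc1, AlgHom.toLinearMap_apply,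
      Algebra.TensorProduct.includeLeft_apply, LinearMap.mulRight_apply, Finset.mul_sum]
    refine Finset.sum_congr rfl fun j _ => ?_
    rw [Algebra.TensorProduct.tmul_mul_tmul, one_mul]
  have h2 : LinearMap.lTensor H (LinearMap.mulRight k x) p = ψ x := by
    rw [hψ, hpe]
    simp only [map_sum, LinearMap.lTensor_tmul, LinearMap.mulRight_apply,
      LinearMap.comp_apply, inc2, AlgHom.toLinearMap_apply,
      Algebra.TensorProduct.includeRight_apply, LinearMap.mulLeft_apply, Finset.sum_mul]
    refine Finset.sum_congr rfl fun j _ => ?_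
    rw [Algebra.TensorProduct.tmul_mul_tmul, mul_one]
  rw [h1, h2, hφψ]
end Casimir

section Counit
variable {k H : Type*} [CommSemiring k] [Semiring H] [HopfAlgebra k H]

local notation "S" => HopfAlgebra.antipode (R := k) (A := H)
local notation "ε" => Coalgebra.counit (R := k)

lemma counit_antipode (a : H) : ε (S a) = ε a := by
  have h1 := counit_right_smul (ℛ k a)
  have h2 := HopfAlgebra.sum_antipode_mul_eq_algebraMap_counit (R := k) (ℛ k a)
  have h3 := congrArg (ε) h2
  simp only [map_sum, Bialgebra.counit_mul, Bialgebra.counit_algebraMap] at h3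
  have h4 := congrArg (fun z => ε (S z)) h1
  simp only [map_sum, map_smul, smul_eq_mul] at h4
  rw [← h4, ← h3]
  exact Finset.sum_congr rfl fun i _ => mul_comm _ _

end Counit

/-- If `H` is a finite-dimensional Hopf algebra over a field `k` with involutive antipode `S`
and `ℓ ∈ H` is a two-sided normalized integral (`x·ℓ = ε(x)·ℓ = ℓ·x`, `ε(ℓ) = 1`), then
`Σ ℓ₍₁₎ ⊗ S(ℓ₍₂₎) = (id ⊗ S)(Δℓ)` is a symmetric separability idempotent for the algebra
underlying `H`. -/
theorem haarIntegral_gives_symmSepIdem (k H : Type*) [Field k] [Ring H] [HopfAlgebra k H]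
    [FiniteDimensional k H]
    (hS : ∀ h : H, HopfAlgebra.antipode (R := k) (HopfAlgebra.antipode (R := k) h) = h)
    (ℓ : H)
    (hleft : ∀ x : H, x * ℓ = Coalgebra.counit (R := k) x • ℓ)
    (hright : ∀ x : H, ℓ * x = Coalgebra.counit (R := k) x • ℓ)
    (hnorm : Coalgebra.counit (R := k) ℓ = (1 : k)) :
    IsSymmSepIdem k
      (LinearMap.lTensor H (HopfAlgebra.antipode (R := k)) (Coalgebra.comul (R := k) ℓ)) := by
  set S' : H →ₗ[k] H := HopfAlgebra.antipode (R := k) with hS'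
  set rl : Coalgebra.Repr k ℓ (H × H) := ℛ k ℓ with hrl
  have hpe : LinearMap.lTensor H S' (Coalgebra.comul (R := k) ℓ)
      = ∑ j ∈ rl.index, rl.left j ⊗ₜ[k] S' (rl.right j) := by
    rw [← rl.eq, map_sum]
    simp
  -- S ℓ = ℓ
  have hεS : Coalgebra.counit (R := k) (S' ℓ) = 1 := by
    rw [hS', counit_antipode, hnorm]
  have hlS : ℓ * S' ℓ = ℓ := by rw [hright (S' ℓ), hεS, one_smul]
  have hSl : S' ℓ = ℓ := by
    have h2 : S' (ℓ * S' ℓ) = ℓ * S' ℓ := by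
      rw [hS', my_antipode_mul, hS]
    rw [hlS] at h2
    exact h2
  refine ⟨?_, ?_, ?_⟩
  · -- Casimir property
    intro x
    exact casimir ℓ hleft x
  · -- normalization
    rw [HopfAlgebra.mul_antipode_lTensor_comul_apply, hnorm, map_one]
  · -- symmetry
    have hc : Coalgebra.comul (R := k) ℓ
        = ∑ j ∈ rl.index, S' (rl.right j) ⊗ₜ[k] S' (rl.left j) := by
      conv_lhs => rw [← hSl]
      exact comul_antipode_repr rl
    have hpe2 : LinearMap.lTensor H S' (Coalgebra.comul (R := k) ℓ)
        = ∑ j ∈ rl.index, S' (rl.right j) ⊗ₜ[k] rl.left j := by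
      rw [hc, map_sum]
      simp only [LinearMap.lTensor_tmul]
      exact Finset.sum_congr rfl fun j _ => by rw [hS]
    conv_lhs => rw [hpe]
    rw [map_sum, hpe2]
    simp
end

section
/- Let H be a finite-dimensional Hopf algebra over a field k whose antipode S is involutive, and let K be a finite-dimensional right H-comodule algebra with coaction δ : K → K ⊗ H, δ(x) = Σ x₍₀₎ ⊗ x₍₁₎. Let t : K → k be the trace form t(x) = tr(L_x), where L_x is left multiplication by x on the finite-dimensional vector space K. Then the trace form is a morphism of right H-comodules: Σ t(x₍₀₎)·x₍₁₎ = t(x)·1_H for all x ∈ K. -/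
open scoped TensorProduct

namespace TraceFormColinearAux

open LinearMap TensorProduct Coalgebra

/-- reorder a dependent quadruple sum -/
lemma sum4_reorder {M : Type*} [AddCommMonoid M] {α β : Type*} {γ : α → Type*} {ε : β → Type*}
    (sa : Finset α) (ta : ∀ i, Finset (γ i)) (sb : Finset β) (tb : ∀ j, Finset (ε j))
    (F : ∀ (i : α), γ i → ∀ (j : β), ε j → M) :
    (∑ j ∈ sb, ∑ q ∈ tb j, ∑ i ∈ sa, ∑ p ∈ ta i, F i p j q)
      = ∑ i ∈ sa, ∑ p ∈ ta i, ∑ j ∈ sb, ∑ q ∈ tb j, F i p j q := by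
  have h1 : (∑ jq ∈ sb.sigma tb, ∑ ip ∈ sa.sigma ta, F ip.1 ip.2 jq.1 jq.2)
      = ∑ j ∈ sb, ∑ q ∈ tb j, ∑ i ∈ sa, ∑ p ∈ ta i, F i p j q := by
    rw [Finset.sum_sigma]
    exact Finset.sum_congr rfl fun j _ => by
      exact Finset.sum_congr rfl fun q _ => by rw [Finset.sum_sigma]
  have h2 : (∑ ip ∈ sa.sigma ta, ∑ jq ∈ sb.sigma tb, F ip.1 ip.2 jq.1 jq.2)
      = ∑ i ∈ sa, ∑ p ∈ ta i, ∑ j ∈ sb, ∑ q ∈ tb j, F i p j q := by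
    rw [Finset.sum_sigma]
    exact Finset.sum_congr rfl fun i _ => by
      exact Finset.sum_congr rfl fun p _ => by rw [Finset.sum_sigma]
  rw [← h1, ← h2, Finset.sum_comm]

section Hopf

variable {k H : Type*} [CommRing k] [Ring H] [HopfAlgebra k H]

local notation "S°" => HopfAlgebra.antipode (R := k) (A := H)

lemma sum_counit_smul_right {ι : Type*} {a : H} (r : Repr k a ι) :
    ∑ i ∈ r.index, counit (R := k) (r.left i) • r.right i = a := by
  have h := congrArg (TensorProduct.lid k H) (Coalgebra.sum_counit_tmul_eq (R := k) r)
  simpa [map_sum, -Coalgebra.sum_counit_tmul_eq] using h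

lemma sum_counit_smul_left {ι : Type*} {a : H} (r : Repr k a ι) :
    ∑ i ∈ r.index, counit (R := k) (r.right i) • r.left i = a := by
  have h := congrArg (TensorProduct.rid k H) (Coalgebra.sum_tmul_counit_eq (R := k) r)
  simpa [map_sum, -Coalgebra.sum_tmul_counit_eq] using h

/-- product of two representations is a representation of the product -/
noncomputable def mulRepr {ι κ : Type*} {a b : H} (ra : Repr k a ι) (rb : Repr k b κ) :
    Repr k (a * b) (ι × κ) where
  index := ra.index ×ˢ rb.index
  left := fun p => ra.left p.1 * rb.left p.2
  right := fun p => ra.right p.1 * rb.right p.2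
  eq := by
    rw [Bialgebra.comul_mul, ← ra.eq, ← rb.eq, Finset.sum_mul_sum, Finset.sum_product]
    simp [Algebra.TensorProduct.tmul_mul_tmul]

lemma antipode_one' : S° (1 : H) = 1 := by
  have h := HopfAlgebra.mul_antipode_rTensor_comul_apply (R := k) (A := H) (a := 1)
  rw [Bialgebra.comul_one, Algebra.TensorProduct.one_def] at h
  simpa using h

/-- `x₁ ⊗ (x₂ ⊗ x₃) ↦ S(x₁c₁) * ((x₂c₂) * S x₃)` -/
noncomputable def tripleMulA (c₁ c₂ : H) : H ⊗[k] (H ⊗[k] H) →ₗ[k] H :=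
  mul' k H ∘ₗ map (S° ∘ₗ mulRight k c₁) (mul' k H ∘ₗ map (mulRight k c₂) S°)

@[simp] lemma tripleMulA_tmul (c₁ c₂ x₁ x₂ x₃ : H) :
    tripleMulA (k := k) c₁ c₂ (x₁ ⊗ₜ (x₂ ⊗ₜ x₃)) = S° (x₁ * c₁) * ((x₂ * c₂) * S° x₃) := by
  simp [tripleMulA]

/-- `y₁ ⊗ (y₂ ⊗ y₃) ↦ S(d₁y₁) * ((d₂ * (y₂ * S y₃)) * d₃)` -/
noncomputable def tripleMulB (d₁ d₂ d₃ : H) : H ⊗[k] (H ⊗[k] H) →ₗ[k] H :=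
  mul' k H ∘ₗ
    map (S° ∘ₗ mulLeft k d₁) (mulRight k d₃ ∘ₗ mulLeft k d₂ ∘ₗ mul' k H ∘ₗ map LinearMap.id S°)

@[simp] lemma tripleMulB_tmul (d₁ d₂ d₃ y₁ y₂ y₃ : H) :
    tripleMulB (k := k) d₁ d₂ d₃ (y₁ ⊗ₜ (y₂ ⊗ₜ y₃))
      = S° (d₁ * y₁) * ((d₂ * (y₂ * S° y₃)) * d₃) := by
  simp [tripleMulB]

lemma collapse1 {ι κ ι' κ' : Type*} {a b : H} (ra : Repr k a ι) (rb : Repr k b κ)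
    (rla : ∀ i, Repr k (ra.left i) ι') (rlb : ∀ j, Repr k (rb.left j) κ') :
    (∑ j ∈ rb.index, ∑ q ∈ (rlb j).index, ∑ i ∈ ra.index, ∑ p ∈ (rla i).index,
      S° ((rla i).left p * (rlb j).left q) *
        (((rla i).right p * ((rlb j).right q * S° (rb.right j))) * S° (ra.right i)))
    = S° b * S° a := by
  rw [sum4_reorder]
  have step1 : ∀ i ∈ ra.index, (∑ p ∈ (rla i).index, ∑ j ∈ rb.index, ∑ q ∈ (rlb j).index,
      S° ((rla i).left p * (rlb j).left q) *
        (((rla i).right p * ((rlb j).right q * S° (rb.right j))) * S° (ra.right i)))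
      = ∑ j ∈ rb.index,
          (counit (R := k) (ra.left i) * counit (R := k) (rb.left j)) •
            (S° (rb.right j) * S° (ra.right i)) := by
    intro i _
    rw [Finset.sum_comm]
    refine Finset.sum_congr rfl fun j _ => ?_
    have hterm : ∀ p q, S° ((rla i).left p * (rlb j).left q) *
        (((rla i).right p * ((rlb j).right q * S° (rb.right j))) * S° (ra.right i))
        = (S° ((rla i).left p * (rlb j).left q) * ((rla i).right p * (rlb j).right q)) *
            (S° (rb.right j) * S° (ra.right i)) := by
      intro p q; simp only [mul_assoc]
    simp_rw [hterm, ← Finset.sum_mul]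
    have hprod : (∑ p ∈ (rla i).index, ∑ q ∈ (rlb j).index,
        S° ((rla i).left p * (rlb j).left q) * ((rla i).right p * (rlb j).right q))
        = counit (R := k) (ra.left i * rb.left j) • (1 : H) := by
      have h := HopfAlgebra.sum_antipode_mul_eq_smul (R := k) (mulRepr (rla i) (rlb j))
      rw [← h, mulRepr]
      rw [Finset.sum_product]
    rw [hprod, Bialgebra.counit_mul, smul_mul_assoc, one_mul]
  rw [Finset.sum_congr rfl step1]
  have hb : S° b = ∑ j ∈ rb.index, counit (R := k) (rb.left j) • S° (rb.right j) := by
    conv_lhs => rw [← sum_counit_smul_right rb]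
    rw [map_sum]; simp
  have ha : S° a = ∑ i ∈ ra.index, counit (R := k) (ra.left i) • S° (ra.right i) := by
    conv_lhs => rw [← sum_counit_smul_right ra]
    rw [map_sum]; simp
  rw [hb, ha, Finset.sum_mul_sum, Finset.sum_comm]
  refine Finset.sum_congr rfl fun i _ => Finset.sum_congr rfl fun j _ => ?_
  rw [smul_mul_smul_comm, mul_comm]

lemma collapse2 {ι κ ι' κ' : Type*} {a b : H} (ra : Repr k a ι) (rb : Repr k b κ)
    (rra : ∀ i, Repr k (ra.right i) ι') (rrb : ∀ j, Repr k (rb.right j) κ') :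
    (∑ i ∈ ra.index, ∑ p ∈ (rra i).index, ∑ j ∈ rb.index, ∑ q ∈ (rrb j).index,
      S° (ra.left i * rb.left j) *
        (((rra i).left p * ((rrb j).left q * S° ((rrb j).right q))) * S° ((rra i).right p)))
    = S° (a * b) := by
  have step1 : ∀ i ∈ ra.index, (∑ p ∈ (rra i).index, ∑ j ∈ rb.index, ∑ q ∈ (rrb j).index,
      S° (ra.left i * rb.left j) *
        (((rra i).left p * ((rrb j).left q * S° ((rrb j).right q))) * S° ((rra i).right p)))
      = ∑ j ∈ rb.index,
          (counit (R := k) (ra.right i) * counit (R := k) (rb.right j)) •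
            S° (ra.left i * rb.left j) := by
    intro i _
    rw [Finset.sum_comm]
    refine Finset.sum_congr rfl fun j _ => ?_
    have hq : ∀ p, (∑ q ∈ (rrb j).index, S° (ra.left i * rb.left j) *
        (((rra i).left p * ((rrb j).left q * S° ((rrb j).right q))) * S° ((rra i).right p)))
        = counit (R := k) (rb.right j) •
            (S° (ra.left i * rb.left j) * ((rra i).left p * S° ((rra i).right p))) := by
      intro p
      have h := HopfAlgebra.sum_mul_antipode_eq_smul (R := k) (rrb j)
      calc (∑ q ∈ (rrb j).index, S° (ra.left i * rb.left j) *
            (((rra i).left p * ((rrb j).left q * S° ((rrb j).right q))) * S° ((rra i).right p)))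
          = S° (ra.left i * rb.left j) *
            (((rra i).left p * (∑ q ∈ (rrb j).index, (rrb j).left q * S° ((rrb j).right q))) *
              S° ((rra i).right p)) := by
            rw [Finset.mul_sum, Finset.sum_mul, Finset.mul_sum]
        _ = _ := by
            rw [h]
            simp only [mul_one, mul_smul_comm, smul_mul_assoc]
    simp_rw [hq, ← Finset.smul_sum]
    rw [← Finset.mul_sum, HopfAlgebra.sum_mul_antipode_eq_smul (R := k) (rra i)]
    rw [mul_smul_comm, mul_one, smul_smul, mul_comm (counit (R := k) (rb.right j))]
  rw [Finset.sum_congr rfl step1]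
  have hab : a * b = ∑ i ∈ ra.index, ∑ j ∈ rb.index,
      (counit (R := k) (ra.right i) * counit (R := k) (rb.right j)) •
        (ra.left i * rb.left j) := by
    conv_lhs => rw [← sum_counit_smul_left ra, ← sum_counit_smul_left rb]
    rw [Finset.sum_mul_sum]
    exact Finset.sum_congr rfl fun i _ => Finset.sum_congr rfl fun j _ => by
      rw [smul_mul_smul_comm]
  rw [hab, map_sum]
  exact Finset.sum_congr rfl fun i _ => by rw [map_sum]; simp

lemma antipode_mul_rev (a b : H) : S° (a * b) = S° b * S° a := by
  classical
  set ra := ℛ k a with hra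
  set rb := ℛ k b with hrb
  set rla : ∀ i, Repr k (ra.left i) (H × H) := fun i => ℛ k (ra.left i) with hrla
  set rra : ∀ i, Repr k (ra.right i) (H × H) := fun i => ℛ k (ra.right i) with hrra
  set rlb : ∀ j, Repr k (rb.left j) (H × H) := fun j => ℛ k (rb.left j) with hrlb
  set rrb : ∀ j, Repr k (rb.right j) (H × H) := fun j => ℛ k (rb.right j) with hrrb
  have bridgeA := Coalgebra.sum_tmul_tmul_eq (R := k) ra rla rra
  have bridgeB := Coalgebra.sum_tmul_tmul_eq (R := k) rb rlb rrb
  have hA : ∀ c₁ c₂ : H,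
      (∑ i ∈ ra.index, ∑ p ∈ (rla i).index,
        S° ((rla i).left p * c₁) * (((rla i).right p * c₂) * S° (ra.right i)))
      = ∑ i ∈ ra.index, ∑ p ∈ (rra i).index,
        S° (ra.left i * c₁) * (((rra i).left p * c₂) * S° ((rra i).right p)) := by
    intro c₁ c₂
    have h := congrArg (tripleMulA (k := k) c₁ c₂) bridgeA
    simpa [map_sum, -Coalgebra.sum_tmul_tmul_eq] using h
  have hB : ∀ d₁ d₂ d₃ : H,
      (∑ j ∈ rb.index, ∑ q ∈ (rlb j).index,
        S° (d₁ * (rlb j).left q) * ((d₂ * ((rlb j).right q * S° (rb.right j))) * d₃))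
      = ∑ j ∈ rb.index, ∑ q ∈ (rrb j).index,
        S° (d₁ * rb.left j) * ((d₂ * ((rrb j).left q * S° ((rrb j).right q))) * d₃) := by
    intro d₁ d₂ d₃
    have h := congrArg (tripleMulB (k := k) d₁ d₂ d₃) bridgeB
    simpa [map_sum, -Coalgebra.sum_tmul_tmul_eq] using h
  symm
  calc S° b * S° a
      = ∑ j ∈ rb.index, ∑ q ∈ (rlb j).index, ∑ i ∈ ra.index, ∑ p ∈ (rla i).index,
          S° ((rla i).left p * (rlb j).left q) *
            (((rla i).right p * ((rlb j).right q * S° (rb.right j))) * S° (ra.right i)) :=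
        (collapse1 ra rb rla rlb).symm
    _ = ∑ j ∈ rb.index, ∑ q ∈ (rlb j).index, ∑ i ∈ ra.index, ∑ p ∈ (rra i).index,
          S° (ra.left i * (rlb j).left q) *
            (((rra i).left p * ((rlb j).right q * S° (rb.right j))) * S° ((rra i).right p)) :=
        Finset.sum_congr rfl fun j _ => Finset.sum_congr rfl fun q _ => hA _ _
    _ = ∑ i ∈ ra.index, ∑ p ∈ (rra i).index, ∑ j ∈ rb.index, ∑ q ∈ (rlb j).index,
          S° (ra.left i * (rlb j).left q) *
            (((rra i).left p * ((rlb j).right q * S° (rb.right j))) * S° ((rra i).right p)) := by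
        rw [sum4_reorder]
    _ = ∑ i ∈ ra.index, ∑ p ∈ (rra i).index, ∑ j ∈ rb.index, ∑ q ∈ (rrb j).index,
          S° (ra.left i * rb.left j) *
            (((rra i).left p * ((rrb j).left q * S° ((rrb j).right q))) * S° ((rra i).right p)) :=
        Finset.sum_congr rfl fun i _ => Finset.sum_congr rfl fun p _ => hB _ _ _
    _ = S° (a * b) := collapse2 ra rb rra rrb


/-- cop-antipode identity `Σ h₂ S(h₁) = ε(h) 1` for involutive antipode -/
lemma cop_antipode (hS : ∀ h : H, S° (S° h) = h) (c : H) :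
    mul' k H ((TensorProduct.comm k H H) (rTensor H S° (comul (R := k) c)))
      = counit (R := k) c • (1 : H) := by
  have hc : comul (R := k) c = ∑ i ∈ (ℛ k c).index, (ℛ k c).left i ⊗ₜ[k] (ℛ k c).right i :=
    (ℛ k c).eq.symm
  rw [hc, map_sum, map_sum, map_sum]
  simp only [rTensor_tmul, comm_tmul, mul'_apply]
  have hterm : ∀ i ∈ (ℛ k c).index, (ℛ k c).right i * S° ((ℛ k c).left i)
      = S° ((ℛ k c).left i * S° ((ℛ k c).right i)) := by
    intro i _
    rw [antipode_mul_rev, hS]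
  rw [Finset.sum_congr rfl hterm, ← map_sum, HopfAlgebra.sum_mul_antipode_eq_smul (ℛ k c),
    map_smul, antipode_one']


end Hopf

section PT

variable {k : Type*} [Field k] {K H : Type*} [AddCommGroup K] [Module k K]
  [Ring H] [Algebra k H] [Module.Finite k K] [Module.Finite k H]

/-- `(a ⊗ b) ⊗ h ↦ ξ(b h) • a` -/
noncomputable def muXi (ξ : H →ₗ[k] k) : (H ⊗[k] H) ⊗[k] H →ₗ[k] H :=
  (TensorProduct.rid k H).toLinearMap ∘ₗ lTensor H (ξ ∘ₗ mul' k H) ∘ₗ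
    (TensorProduct.assoc k H H H).toLinearMap

@[simp] lemma muXi_tmul (ξ : H →ₗ[k] k) (a b h : H) :
    muXi ξ ((a ⊗ₜ[k] b) ⊗ₜ[k] h) = ξ (b * h) • a := by
  simp [muXi]

/-- partial trace collapse -/
lemma trace_pt (ξ : H →ₗ[k] k) (g : K →ₗ[k] K ⊗[k] (H ⊗[k] H)) :
    trace k (K ⊗[k] H)
      (lTensor K (muXi ξ) ∘ₗ (TensorProduct.assoc k K (H ⊗[k] H) H).toLinearMap ∘ₗ
        rTensor H g)
    = trace k K ((TensorProduct.rid k K).toLinearMap ∘ₗ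
        lTensor K (ξ ∘ₗ mul' k H ∘ₗ (TensorProduct.comm k H H).toLinearMap) ∘ₗ g) := by
  obtain ⟨u, rfl⟩ : ∃ u, dualTensorHom k K (K ⊗[k] (H ⊗[k] H)) u = g :=
    (dualTensorHomEquiv k K (K ⊗[k] (H ⊗[k] H))).surjective g
  induction u using TensorProduct.induction_on with
  | zero => simp
  | add u v hu hv =>
      rw [map_add] at *
      rw [rTensor_add, comp_add, comp_add, map_add, hu, hv, comp_add, comp_add, map_add]
  | tmul φ t =>
      induction t using TensorProduct.induction_on with
      | zero => simp
      | add t s ht hs =>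
          rw [tmul_add, map_add] at *
          rw [rTensor_add, comp_add, comp_add, map_add, ht, hs, comp_add, comp_add, map_add]
      | tmul z ab =>
          induction ab using TensorProduct.induction_on with
          | zero => simp
          | add p q hp hq =>
              rw [tmul_add, tmul_add, map_add] at *
              rw [rTensor_add, comp_add, comp_add, map_add, hp, hq, comp_add, comp_add, map_add]
          | tmul a b =>
              have hE : (lTensor K (muXi ξ) ∘ₗ
                    (TensorProduct.assoc k K (H ⊗[k] H) H).toLinearMap ∘ₗ
                    rTensor H (dualTensorHom k K (K ⊗[k] (H ⊗[k] H)) (φ ⊗ₜ (z ⊗ₜ (a ⊗ₜ b)))))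
                  = dualTensorHom k (K ⊗[k] H) (K ⊗[k] H)
                      (((TensorProduct.lid k k).toLinearMap ∘ₗ
                          map φ (ξ ∘ₗ mulLeft k b)) ⊗ₜ (z ⊗ₜ a)) := by
                apply TensorProduct.ext'
                intro w h
                simp [dualTensorHom_apply, smul_tmul', tmul_smul, smul_smul, mul_comm]
              have hF : ((TensorProduct.rid k K).toLinearMap ∘ₗ
                    lTensor K (ξ ∘ₗ mul' k H ∘ₗ (TensorProduct.comm k H H).toLinearMap) ∘ₗ
                    dualTensorHom k K (K ⊗[k] (H ⊗[k] H)) (φ ⊗ₜ (z ⊗ₜ (a ⊗ₜ b))))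
                  = ξ (b * a) • dualTensorHom k K K (φ ⊗ₜ z) := by
                apply LinearMap.ext
                intro y
                simp [dualTensorHom_apply, smul_smul, mul_comm]
              rw [hE, hF, map_smul, trace_eq_contract_apply, trace_eq_contract_apply]
              simp [mul_comm]

end PT

end TraceFormColinearAux

open scoped TensorProduct

set_option maxHeartbeats 2000000 in
set_option synthInstance.maxHeartbeats 400000 in
open LinearMap TensorProduct TraceFormColinearAux in
/-- Let `H` be a finite-dimensional Hopf algebra over a field `k` with involutive antipode and
let `K` be a finite-dimensional right `H`-comodule algebra with coaction `δ : K → K ⊗ H`.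
Then the trace form `t(x) = tr(L_x)` is a morphism of right `H`-comodules:
`Σ t(x₍₀₎)·x₍₁₎ = t(x)·1_H` for all `x ∈ K`. -/
theorem traceForm_colinear (k H K : Type*) [Field k] [Ring H] [HopfAlgebra k H]
    [FiniteDimensional k H] [Ring K] [Algebra k K] [FiniteDimensional k K]
    (hS : ∀ h : H, HopfAlgebra.antipode (R := k) (HopfAlgebra.antipode (R := k) h) = h)
    (δ : K →ₐ[k] K ⊗[k] H)
    (hcoassoc : ∀ x : K,
      TensorProduct.assoc k K H H (LinearMap.rTensor H δ.toLinearMap (δ x))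
        = LinearMap.lTensor K (Coalgebra.comul (R := k)) (δ x))
    (hcounit : ∀ x : K,
      TensorProduct.rid k K (LinearMap.lTensor K (Coalgebra.counit (R := k)) (δ x)) = x) :
    ∀ x : K,
      TensorProduct.lid k H
        (LinearMap.rTensor H ((LinearMap.trace k K) ∘ₗ (LinearMap.mul k K)) (δ x))
      = ((LinearMap.trace k K) ∘ₗ (LinearMap.mul k K)) x • (1 : H) := by
  intro x
  set S' : H →ₗ[k] H := HopfAlgebra.antipode (R := k) with hS'def
  set d : K →ₗ[k] K ⊗[k] H := δ.toLinearMap with hddef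
  set t : K →ₗ[k] k := (trace k K) ∘ₗ (mul k K) with htdef
  have hdapp : ∀ z : K, d z = δ z := fun z => rfl
  rw [← sub_eq_zero, ← Module.forall_dual_apply_eq_zero_iff k]
  intro ξ
  rw [map_sub, sub_eq_zero]
  have hfun : ∀ u : K ⊗[k] H,
      ξ (TensorProduct.lid k H (rTensor H t u))
        = t ((TensorProduct.rid k K) (lTensor K ξ u)) := by
    intro u
    induction u using TensorProduct.induction_on with
    | zero => simp
    | add u v hu hv => simp [map_add, hu, hv]
    | tmul z h => simp [mul_comm]
  have hδx : (δ x : K ⊗[k] H) = d x := (hdapp x).symm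
  rw [hδx, hfun]
  set r : K := (TensorProduct.rid k K) (lTensor K ξ (d x)) with hrdef
  have hmulL : ∀ z : K, mul k K z = mulLeft k z := by
    intro z; ext y; simp
  set P0 : K ⊗[k] H →ₗ[k] K :=
    (TensorProduct.rid k K).toLinearMap ∘ₗ lTensor K (ξ ∘ₗ mul' k H) ∘ₗ
      (TensorProduct.assoc k K H H).toLinearMap ∘ₗ rTensor H d with hP0
  set Q0 : K →ₗ[k] K ⊗[k] H :=
    rTensor H (mulLeft k x) ∘ₗ lTensor K S' ∘ₗ d with hQ0
  set g : K →ₗ[k] K ⊗[k] (H ⊗[k] H) :=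
    map (mulLeft k x) (rTensor H S') ∘ₗ (TensorProduct.assoc k K H H).toLinearMap ∘ₗ
      rTensor H d ∘ₗ d with hg
  -- key pointwise computation for Claim 1
  have GL2 : ∀ (u : K ⊗[k] H) (w : (K ⊗[k] H) ⊗[k] H),
      (TensorProduct.rid k K) (lTensor K (ξ ∘ₗ mul' k H) ((TensorProduct.assoc k K H H)
        (rTensor H (mulLeft k u) (lTensor (K ⊗[k] H) S' w))))
      = (TensorProduct.rid k K) (lTensor K ξ
          (u * (lTensor K (mul' k H ∘ₗ lTensor H S') ((TensorProduct.assoc k K H H) w)))) := by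
    intro u w
    induction u using TensorProduct.induction_on with
    | zero =>
        have h0 : mulLeft k (0 : K ⊗[k] H) = 0 := by ext e; simp
        simp [h0]
    | add u v hu hv =>
        have h1 : mulLeft k (u + v) = mulLeft k u + mulLeft k v := by
          ext e; simp [add_mul]
        simp only [h1, rTensor_add, LinearMap.add_apply, map_add, add_mul, hu, hv]
    | tmul p q =>
        induction w using TensorProduct.induction_on with
        | zero => simp
        | add w1 w2 h1 h2 => simp only [map_add, h1, h2, mul_add]
        | tmul zc e =>
            induction zc using TensorProduct.induction_on with
            | zero => simp
            | add a1 a2 h1 h2 =>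
                simp only [add_tmul, map_add, h1, h2, mul_add]
            | tmul z c =>
                simp [Algebra.TensorProduct.tmul_mul_tmul, mul_assoc]
  have hcomm : rTensor H d ∘ₗ lTensor K S' = lTensor (K ⊗[k] H) S' ∘ₗ rTensor H d := by
    apply TensorProduct.ext'
    intro z h
    simp
  have hdx : d ∘ₗ mulLeft k x = mulLeft k (δ x) ∘ₗ d := by
    ext z
    simp [hdapp, map_mul]
  have claim1 : P0 ∘ₗ Q0 = mulLeft k r := by
    apply LinearMap.ext
    intro y
    have e1 : rTensor H d (Q0 y)
        = rTensor H (mulLeft k (δ x)) (lTensor (K ⊗[k] H) S' (rTensor H d (d y))) := by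
      have a1 : Q0 y = rTensor H (mulLeft k x) (lTensor K S' (d y)) := by
        rw [hQ0]; simp [comp_apply]
      rw [a1, ← rTensor_comp_apply, hdx, rTensor_comp_apply]
      congr 1
      rw [← comp_apply (rTensor H d) (lTensor K S'), rTensor_comp_lTensor,
        ← lTensor_comp_rTensor, comp_apply]
    have e2 : (P0 ∘ₗ Q0) y
        = (TensorProduct.rid k K) (lTensor K ξ
            (δ x * (lTensor K (mul' k H ∘ₗ lTensor H S')
              ((TensorProduct.assoc k K H H) (rTensor H d (d y)))))) := by
      rw [hP0]
      simp only [comp_apply, LinearEquiv.coe_coe]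
      rw [e1, GL2 (δ x) (rTensor H d (d y))]
    rw [e2]
    have e25 : (TensorProduct.assoc k K H H) (rTensor H d (d y))
        = lTensor K (Coalgebra.comul (R := k)) (d y) := by
      rw [hdapp y]; exact hcoassoc y
    rw [e25]
    have e3 : lTensor K (mul' k H ∘ₗ lTensor H S') (lTensor K (Coalgebra.comul (R := k)) (d y))
        = lTensor K ((mul' k H ∘ₗ lTensor H S') ∘ₗ Coalgebra.comul (R := k)) (d y) :=
      by simp only [lTensor_comp_apply]
    rw [e3]
    have e4 : (mul' k H ∘ₗ lTensor H S') ∘ₗ Coalgebra.comul (R := k)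
        = Algebra.linearMap k H ∘ₗ Coalgebra.counit (R := k) := by
      rw [comp_assoc]
      exact HopfAlgebra.mul_antipode_lTensor_comul (R := k)
    rw [e4]
    have e5 : lTensor K (Algebra.linearMap k H ∘ₗ Coalgebra.counit (R := k)) (d y)
        = y ⊗ₜ[k] (1 : H) := by
      rw [lTensor_comp]
      simp only [comp_apply]
      have e6 : lTensor K (Coalgebra.counit (R := k)) (d y) = y ⊗ₜ[k] (1 : k) := by
        have h7 := hcounit y
        rw [← hdapp] at h7
        have := congrArg (TensorProduct.rid k K).symm h7
        rw [LinearEquiv.symm_apply_apply] at this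
        rw [this, TensorProduct.rid_symm_apply]
      rw [e6]
      simp [Algebra.TensorProduct.one_def]
    rw [e5]
    have GL3 : ∀ u : K ⊗[k] H,
        (TensorProduct.rid k K) (lTensor K ξ (u * (y ⊗ₜ[k] (1 : H))))
          = (TensorProduct.rid k K) (lTensor K ξ u) * y := by
      intro u
      induction u using TensorProduct.induction_on with
      | zero => simp
      | add u v hu hv => simp [add_mul, map_add, hu, hv]
      | tmul p q => simp [Algebra.TensorProduct.tmul_mul_tmul, smul_mul_assoc]
    rw [GL3, hδx]
    simp [hrdef]
  -- Claim 2
  have GL4 : ∀ (v' : K ⊗[k] H) (c h : H),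
      lTensor K (muXi ξ) ((TensorProduct.assoc k K (H ⊗[k] H) H)
        ((map (mulLeft k x) (rTensor H S') ((TensorProduct.assoc k K H H) (v' ⊗ₜ[k] c)))
          ⊗ₜ[k] h))
      = ξ (c * h) • (rTensor H (mulLeft k x) (lTensor K S' v')) := by
    intro v' c h
    induction v' using TensorProduct.induction_on with
    | zero => simp
    | add v1 v2 h1 h2 => simp only [add_tmul, map_add, h1, h2, smul_add]
    | tmul w' c' => simp [smul_tmul', tmul_smul]
  have claim2' : ∀ (v : K ⊗[k] H) (h : H),
      Q0 ((TensorProduct.rid k K) (lTensor K (ξ ∘ₗ mul' k H)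
        ((TensorProduct.assoc k K H H) (v ⊗ₜ[k] h))))
      = lTensor K (muXi ξ) ((TensorProduct.assoc k K (H ⊗[k] H) H)
          ((map (mulLeft k x) (rTensor H S')
            ((TensorProduct.assoc k K H H) (rTensor H d v))) ⊗ₜ[k] h)) := by
    intro v h
    induction v using TensorProduct.induction_on with
    | zero => simp
    | add v1 v2 h1 h2 =>
        simp only [add_tmul, map_add, h1, h2]
    | tmul w c =>
        have lhs : Q0 ((TensorProduct.rid k K) (lTensor K (ξ ∘ₗ mul' k H)
            ((TensorProduct.assoc k K H H) ((w ⊗ₜ[k] c) ⊗ₜ[k] h))))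
            = ξ (c * h) • (rTensor H (mulLeft k x) (lTensor K S' (d w))) := by
          simp [hQ0, comp_apply]
        rw [lhs]
        have rhs : rTensor H d (w ⊗ₜ[k] c) = (d w) ⊗ₜ[k] c := by simp
        rw [rhs, GL4 (d w) c h]
  have claim2 : Q0 ∘ₗ P0
      = lTensor K (muXi ξ) ∘ₗ (TensorProduct.assoc k K (H ⊗[k] H) H).toLinearMap ∘ₗ
          rTensor H g := by
    apply TensorProduct.ext'
    intro z h
    have l : (Q0 ∘ₗ P0) (z ⊗ₜ[k] h)
        = Q0 ((TensorProduct.rid k K) (lTensor K (ξ ∘ₗ mul' k H)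
            ((TensorProduct.assoc k K H H) ((d z) ⊗ₜ[k] h)))) := by
      rw [hP0]; simp only [comp_apply, LinearEquiv.coe_coe, rTensor_tmul]
    have rr : (lTensor K (muXi ξ) ∘ₗ (TensorProduct.assoc k K (H ⊗[k] H) H).toLinearMap ∘ₗ
          rTensor H g) (z ⊗ₜ[k] h)
        = lTensor K (muXi ξ) ((TensorProduct.assoc k K (H ⊗[k] H) H)
            ((map (mulLeft k x) (rTensor H S')
              ((TensorProduct.assoc k K H H) (rTensor H d (d z)))) ⊗ₜ[k] h)) := by
      rw [hg]; simp only [comp_apply, LinearEquiv.coe_coe, rTensor_tmul]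
    rw [l, rr, claim2' (d z) h]
  -- Claim 6
  have claim6 : (TensorProduct.rid k K).toLinearMap ∘ₗ
        lTensor K (ξ ∘ₗ mul' k H ∘ₗ (TensorProduct.comm k H H).toLinearMap) ∘ₗ g
      = ξ 1 • mulLeft k x := by
    apply LinearMap.ext
    intro z
    have hgz : g z = map (mulLeft k x) (rTensor H S')
        (lTensor K (Coalgebra.comul (R := k)) (d z)) := by
      rw [hg]; simp only [comp_apply, LinearEquiv.coe_coe]
      rw [hdapp z, hcoassoc z]
    have GL7 : ∀ v : K ⊗[k] H,
        (TensorProduct.rid k K) (lTensor K (ξ ∘ₗ mul' k H ∘ₗ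
            (TensorProduct.comm k H H).toLinearMap)
          (map (mulLeft k x) (rTensor H S') (lTensor K (Coalgebra.comul (R := k)) v)))
        = ξ 1 • (x * ((TensorProduct.rid k K) (lTensor K (Coalgebra.counit (R := k)) v))) := by
      intro v
      induction v using TensorProduct.induction_on with
      | zero => simp
      | add v1 v2 h1 h2 => simp only [map_add, h1, h2, mul_add, smul_add]
      | tmul z' c =>
          simp only [lTensor_tmul, map_tmul, comp_apply, LinearEquiv.coe_coe, mulLeft_apply,
            rid_tmul]
          rw [cop_antipode hS c]
          simp [mul_smul_comm, smul_smul, mul_comm]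
    simp only [comp_apply, LinearEquiv.coe_coe, hgz, GL7 (d z)]
    rw [hdapp z, hcounit z]
    simp
  -- assemble
  have step : t r = ξ 1 * t x := by
    calc t r = trace k K (mulLeft k r) := by rw [htdef, comp_apply, hmulL]
      _ = trace k K (P0 ∘ₗ Q0) := by rw [claim1]
      _ = trace k (K ⊗[k] H) (Q0 ∘ₗ P0) := trace_comp_comm' Q0 P0
      _ = trace k (K ⊗[k] H) (lTensor K (muXi ξ) ∘ₗ
            (TensorProduct.assoc k K (H ⊗[k] H) H).toLinearMap ∘ₗ rTensor H g) := by
          rw [claim2]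
      _ = trace k K ((TensorProduct.rid k K).toLinearMap ∘ₗ
            lTensor K (ξ ∘ₗ mul' k H ∘ₗ (TensorProduct.comm k H H).toLinearMap) ∘ₗ g) :=
          trace_pt ξ g
      _ = trace k K (ξ 1 • mulLeft k x) := by rw [claim6]
      _ = ξ 1 * trace k K (mulLeft k x) := by rw [map_smul, smul_eq_mul]
      _ = ξ 1 * t x := by rw [htdef, comp_apply, hmulL]
  rw [step, map_smul, smul_eq_mul, mul_comm]
end
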